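/- On the closed triangle Δ = {(x,y) ∈ ℝ² : x ≥ 0, y ≥ 0, x + y ≤ 1}, the function f(x,y) = −2Λ(π(x+y)) + 2Λ(πy) + Λ(πx) satisfies f(x,y) ≤ 4Λ(π/4), with equality if and only if (x,y) = (1/2, 1/4). In particular f has a unique maximum point on Δ, located at (1/2, 1/4). -/

import Mathlib

open Real

/-- The Lobachevsky function `Λ(θ) = -∫₀^θ log|2 sin t| dt`. -/
noncomputable def Lob (θ : ℝ) : ℝ :=
  -∫ t in (0:ℝ)..θ, Real.log |2 * Real.sin t|

section LobAux

open MeasureTheory intervalIntegral Set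

noncomputable def Lb (t : ℝ) : ℝ := Real.log |2 * Real.sin t|

lemma Lb_meas : Measurable Lb :=
  Real.measurable_log.comp (continuous_abs.comp (by continuity : Continuous fun t : ℝ => 2 * Real.sin t)).measurable

lemma Lb_pi_sub (t : ℝ) : Lb (π - t) = Lb t := by
  simp [Lb, Real.sin_pi_sub]

lemma Lb_int_half : IntervalIntegrable Lb volume 0 (π/2) := by
  have hg : IntervalIntegrable (fun t : ℝ => Real.log 2 + 2 * t ^ (-(1/2) : ℝ)) volume 0 (π/2) :=
    intervalIntegrable_const.add ((intervalIntegrable_rpow' (by norm_num)).const_mul 2)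
  refine hg.mono_fun Lb_meas.aestronglyMeasurable.restrict ?_
  refine (ae_restrict_iff' measurableSet_uIoc).mpr (Filter.Eventually.of_forall ?_)
  intro t ht
  rw [uIoc_of_le (by positivity)] at ht
  obtain ⟨ht0, ht1⟩ := ht
  have hsin : 0 < Real.sin t := Real.sin_pos_of_pos_of_lt_pi ht0 (lt_of_le_of_lt ht1 (by linarith [Real.pi_pos]))
  have habs : |2 * Real.sin t| = 2 * Real.sin t := abs_of_pos (by linarith)
  have hrp : (0:ℝ) < t ^ (-(1/2) : ℝ) := Real.rpow_pos_of_pos ht0 _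
  have hlog2 : (0:ℝ) < Real.log 2 := Real.log_pos (by norm_num)
  have hbound : -Real.log t ≤ 2 * t ^ (-(1/2) : ℝ) := by
    have h1 : Real.log (t ^ (-(1/2) : ℝ)) = (-(1/2)) * Real.log t := Real.log_rpow ht0 _
    have h2 : Real.log (t ^ (-(1/2) : ℝ)) ≤ t ^ (-(1/2) : ℝ) - 1 := Real.log_le_sub_one_of_pos hrp
    nlinarith
  have hlow : Real.log t ≤ Real.log (2 * Real.sin t) := by
    have h3 : 2/π * t ≤ Real.sin t := Real.mul_le_sin ht0.le ht1
    have h4 : t ≤ 2 * Real.sin t := by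
      have hπ : π ≤ 4 := by linarith [Real.pi_le_four]
      have h5 : (1:ℝ)/2 ≤ 2/π := by
        rw [div_le_div_iff₀ (by norm_num) Real.pi_pos]; nlinarith
      nlinarith [mul_le_mul_of_nonneg_right h5 ht0.le]
    exact Real.log_le_log ht0 h4
  have hup : Real.log (2 * Real.sin t) ≤ Real.log 2 := by
    have : 2 * Real.sin t ≤ 2 := by nlinarith [Real.sin_le_one t]
    exact Real.log_le_log (by linarith) this
  simp only [Real.norm_eq_abs]
  rw [Lb, habs]
  rw [abs_of_pos (show (0:ℝ) < Real.log 2 + 2 * t ^ (-(1/2) : ℝ) by nlinarith), abs_le]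
  constructor
  · nlinarith
  · nlinarith

lemma Lb_int_pi : IntervalIntegrable Lb volume 0 π := by
  refine Lb_int_half.trans ?_
  have h := (Lb_int_half.comp_sub_left π)
  have he : (fun x => Lb (π - x)) = Lb := funext Lb_pi_sub
  rw [he] at h
  have h2 : π - π/2 = π/2 := by ring
  rw [h2, sub_zero] at h
  exact h.symm

lemma Lb_int {u v : ℝ} (hu : u ∈ Icc 0 π) (hv : v ∈ Icc 0 π) :
    IntervalIntegrable Lb volume u v := by
  refine Lb_int_pi.mono_set ?_
  exact uIcc_subset_uIcc (by rw [uIcc_of_le Real.pi_pos.le]; exact hu) (by rw [uIcc_of_le Real.pi_pos.le]; exact hv)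

lemma Lb_reflect_int (a b : ℝ) :
    (∫ t in a..b, Lb t) = ∫ t in (π - b)..(π - a), Lb t := by
  rw [← intervalIntegral.integral_comp_sub_left Lb π]
  exact intervalIntegral.integral_congr (fun t _ => (Lb_pi_sub t).symm)

lemma Lb_integral_pi : (∫ t in (0:ℝ)..π, Lb t) = 0 := by
  set K := ∫ t in (0:ℝ)..(π/2), Lb t with hK
  have hmem0 : (0:ℝ) ∈ Icc (0:ℝ) π := ⟨le_refl _, Real.pi_pos.le⟩
  have hmemh : (π/2) ∈ Icc (0:ℝ) π := ⟨by positivity, by linarith [Real.pi_pos]⟩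
  have hmemπ : π ∈ Icc (0:ℝ) π := ⟨Real.pi_pos.le, le_refl _⟩
  -- I = 2K
  have hsplit : (∫ t in (0:ℝ)..π, Lb t) = K + ∫ t in (π/2)..π, Lb t :=
    (intervalIntegral.integral_add_adjacent_intervals (Lb_int hmem0 hmemh) (Lb_int hmemh hmemπ)).symm
  have hrefl : (∫ t in (π/2)..π, Lb t) = K := by
    rw [Lb_reflect_int (π/2) π]
    have e1 : π - π = 0 := by ring
    have e2 : π - π/2 = π/2 := by ring
    rw [e1, e2]
  have hI2K : (∫ t in (0:ℝ)..π, Lb t) = 2 * K := by rw [hsplit, hrefl]; ring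
  -- I = 4K via doubling
  have hdouble : (2:ℝ) * ∫ t in (0:ℝ)..(π/2), Lb (2*t) = ∫ t in (0:ℝ)..π, Lb t := by
    have h := intervalIntegral.mul_integral_comp_mul_left (a := (0:ℝ)) (b := π/2) (f := Lb) (c := 2)
    rw [mul_zero] at h
    have e : 2 * (π/2) = π := by ring
    rw [e] at h
    exact h
  have hae : (∫ t in (0:ℝ)..(π/2), Lb (2*t)) =
      ∫ t in (0:ℝ)..(π/2), (Lb t + Lb (π/2 - t)) := by
    apply intervalIntegral.integral_congr_ae
    have h1 : ∀ᵐ t : ℝ, t ≠ π/2 := by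
      refine ae_iff.mpr ?_
      have : {t : ℝ | ¬ t ≠ π/2} = {π/2} := by ext t; simp
      rw [this]; exact Real.volume_singleton
    filter_upwards [h1] with t ht htmem
    rw [uIoc_of_le (by positivity)] at htmem
    obtain ⟨ht0, ht1⟩ := htmem
    have ht1' : t < π/2 := lt_of_le_of_ne ht1 ht
    have hs : 0 < Real.sin t := Real.sin_pos_of_pos_of_lt_pi ht0 (by linarith [Real.pi_pos])
    have hc : 0 < Real.cos t := Real.cos_pos_of_mem_Ioo ⟨by linarith [Real.pi_pos], ht1'⟩
    have : Lb (2*t) = Lb t + Lb (π/2 - t) := by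
      simp only [Lb, Real.sin_pi_div_two_sub]
      rw [Real.sin_two_mul]
      have habs : |2 * (2 * Real.sin t * Real.cos t)| = |2 * Real.sin t| * |2 * Real.cos t| := by
        rw [← abs_mul]; ring_nf
      rw [habs, Real.log_mul (by positivity) (by positivity)]
    exact this
  have hint2 : IntervalIntegrable (fun t => Lb (π/2 - t)) volume 0 (π/2) := by
    have h := (Lb_int hmem0 hmemh).comp_sub_left (π/2)
    have e1 : π/2 - 0 = π/2 := by ring
    have e2 : π/2 - π/2 = 0 := by ring
    rw [e1, e2] at h
    exact h.symm
  have hadd : (∫ t in (0:ℝ)..(π/2), (Lb t + Lb (π/2 - t))) = K + K := by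
    rw [intervalIntegral.integral_add (Lb_int hmem0 hmemh) hint2]
    congr 1
    rw [intervalIntegral.integral_comp_sub_left Lb (π/2)]
    norm_num
    exact hK.symm
  have hI4K : (∫ t in (0:ℝ)..π, Lb t) = 4 * K := by
    rw [← hdouble, hae, hadd]; ring
  have : (2:ℝ) * K = 4 * K := by rw [← hI2K, ← hI4K]
  have hK0 : K = 0 := by linarith
  rw [hI2K, hK0, mul_zero]

noncomputable def Lob' (θ : ℝ) : ℝ := -∫ t in (0:ℝ)..θ, Real.log |2 * Real.sin t|

lemma Lob'_eq (θ : ℝ) : Lob' θ = -∫ t in (0:ℝ)..θ, Lb t := rfl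

lemma Lob'_cont : ContinuousOn Lob' (Icc 0 π) := by
  have h := intervalIntegral.continuousOn_primitive_interval' (μ := volume)
      (f := Lb) (b₁ := (0:ℝ)) (b₂ := π) (a := 0) Lb_int_pi (by rw [uIcc_of_le Real.pi_pos.le]; exact ⟨le_refl _, Real.pi_pos.le⟩)
  rw [uIcc_of_le Real.pi_pos.le] at h
  exact h.neg

lemma Lob'_deriv {θ : ℝ} (h0 : 0 < θ) (h1 : θ < π) :
    HasDerivAt Lob' (-Lb θ) θ := by
  have hint : IntervalIntegrable Lb volume 0 θ := Lb_int ⟨le_refl _, Real.pi_pos.le⟩ ⟨h0.le, h1.le⟩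
  have hsin : Real.sin θ ≠ 0 := (Real.sin_pos_of_pos_of_lt_pi h0 h1).ne'
  have hcont : ContinuousAt Lb θ := by
    apply ContinuousAt.log
    · exact (continuous_abs.comp (by continuity : Continuous fun t : ℝ => 2 * Real.sin t)).continuousAt
    · simp [abs_eq_zero, hsin]
  have hmeas : StronglyMeasurableAtFilter Lb (nhds θ) volume :=
    Lb_meas.stronglyMeasurable.stronglyMeasurableAtFilter
  exact (intervalIntegral.integral_hasDerivAt_right hint hmeas hcont).neg

lemma Lob'_reflect {θ : ℝ} (h0 : 0 ≤ θ) (h1 : θ ≤ π) : Lob' (π - θ) = -Lob' θ := by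
  have hm1 : (π - θ) ∈ Icc (0:ℝ) π := ⟨by linarith, by linarith⟩
  have hsplit : (∫ t in (0:ℝ)..(π - θ), Lb t) + (∫ t in (π - θ)..π, Lb t) = ∫ t in (0:ℝ)..π, Lb t :=
    intervalIntegral.integral_add_adjacent_intervals (Lb_int ⟨le_refl _, Real.pi_pos.le⟩ hm1)
      (Lb_int hm1 ⟨Real.pi_pos.le, le_refl _⟩)
  have hrefl : (∫ t in (π - θ)..π, Lb t) = ∫ t in (0:ℝ)..θ, Lb t := by
    rw [Lb_reflect_int (π - θ) π]
    have e1 : π - π = 0 := by ring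
    have e2 : π - (π - θ) = θ := by ring
    rw [e1, e2]
  rw [Lb_integral_pi, hrefl] at hsplit
  rw [Lob'_eq, Lob'_eq]
  linarith

lemma Lob'_half : Lob' (π/2) = 0 := by
  have h := Lob'_reflect (θ := π/2) (by positivity) (by linarith [Real.pi_pos])
  have e : π - π/2 = π/2 := by ring
  rw [e] at h
  linarith

lemma Lob'_mid_strict {m d : ℝ} (hm : 0 < m) (hm2 : m < π/2) (hd : 0 < d) (hdm : d ≤ m) :
    Lob' (m + d) + Lob' (m - d) < 2 * Lob' m := by
  set φ : ℝ → ℝ := fun s => Lob' (m + s) + Lob' (m - s) with hφ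
  have hpi : 0 < π := Real.pi_pos
  have hmap1 : ∀ s ∈ Icc (0:ℝ) m, (m + s) ∈ Icc (0:ℝ) π := by
    intro s hs; exact ⟨by linarith [hs.1], by linarith [hs.2]⟩
  have hmap2 : ∀ s ∈ Icc (0:ℝ) m, (m - s) ∈ Icc (0:ℝ) π := by
    intro s hs; exact ⟨by linarith [hs.2], by linarith [hs.1]⟩
  have hcont : ContinuousOn φ (Icc 0 m) := by
    apply ContinuousOn.add
    · exact Lob'_cont.comp (continuous_const.add continuous_id).continuousOn hmap1
    · exact Lob'_cont.comp (continuous_const.sub continuous_id).continuousOn hmap2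
  have hderiv : ∀ s ∈ Ioo (0:ℝ) m, HasDerivAt φ (-Lb (m + s) + Lb (m - s)) s := by
    intro s hs
    have h1 : HasDerivAt (fun s : ℝ => Lob' (m + s)) (-Lb (m + s)) s := by
      have hin : HasDerivAt (fun s : ℝ => m + s) 1 s := (hasDerivAt_id s).const_add m
      have hout : HasDerivAt Lob' (-Lb (m + s)) (m + s) :=
        Lob'_deriv (by linarith [hs.1]) (by linarith [hs.2])
      simpa [Function.comp_def] using hout.comp s hin
    have h2 : HasDerivAt (fun s : ℝ => Lob' (m - s)) (Lb (m - s)) s := by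
      have hin : HasDerivAt (fun s : ℝ => m - s) (-1) s := (hasDerivAt_id s).const_sub m
      have hout : HasDerivAt Lob' (-Lb (m - s)) (m - s) :=
        Lob'_deriv (by linarith [hs.2]) (by linarith [hs.1])
      have := hout.comp s hin
      simpa [Function.comp_def] using this
    exact h1.add h2
  have hneg : ∀ s ∈ Ioo (0:ℝ) m, deriv φ s < 0 := by
    intro s hs
    rw [(hderiv s hs).deriv]
    have hs1 : 0 < Real.sin (m - s) := Real.sin_pos_of_pos_of_lt_pi (by linarith [hs.2]) (by linarith [hs.1])
    have hs2 : Real.sin (m - s) < Real.sin (m + s) := by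
      have h1 : Real.sin (m + s) - Real.sin (m - s) = 2 * Real.cos m * Real.sin s := by
        rw [Real.sin_add, Real.sin_sub]; ring
      have hc : 0 < Real.cos m := Real.cos_pos_of_mem_Ioo ⟨by linarith, hm2⟩
      have hss : 0 < Real.sin s := Real.sin_pos_of_pos_of_lt_pi hs.1 (by linarith [hs.2])
      nlinarith
    have hlt : Real.log |2 * Real.sin (m - s)| < Real.log |2 * Real.sin (m + s)| := by
      rw [abs_of_pos (by linarith), abs_of_pos (by linarith)]
      exact Real.log_lt_log (by linarith) (by linarith)
    simp only [Lb]
    linarith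
  have hanti : StrictAntiOn φ (Icc 0 m) :=
    strictAntiOn_of_deriv_neg (convex_Icc 0 m) hcont (by rwa [interior_Icc])
  have h := hanti (left_mem_Icc.mpr hm.le) ⟨hd.le, hdm⟩ hd
  simp only [hφ, add_zero, sub_zero] at h
  linarith

lemma Lob'_mid_le {m d : ℝ} (hm : 0 ≤ m) (hm2 : m ≤ π/2) (hd : 0 ≤ d) (hdm : d ≤ m) :
    Lob' (m + d) + Lob' (m - d) ≤ 2 * Lob' m := by
  rcases eq_or_lt_of_le hd with rfl | hd'
  · simp; ring_nf; rfl
  rcases eq_or_lt_of_le hm2 with rfl | hm2'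
  · have h1 : Lob' (π/2 + d) = - Lob' (π/2 - d) := by
      have e : π/2 + d = π - (π/2 - d) := by ring
      rw [e]
      exact Lob'_reflect (by linarith) (by linarith [Real.pi_pos])
    rw [h1, Lob'_half]
    ring_nf
    rfl
  · exact (Lob'_mid_strict (by linarith) hm2' hd' hdm).le

lemma Lob'_sum_le {p q : ℝ} (hp : 0 ≤ p) (hq : 0 ≤ q) (hpq : p + q ≤ π) :
    Lob' p + Lob' q ≤ 2 * Lob' ((p+q)/2) := by
  rcases le_total q p with h | h
  · have := Lob'_mid_le (m := (p+q)/2) (d := (p-q)/2)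
      (by linarith) (by linarith) (by linarith) (by linarith)
    have e1 : (p+q)/2 + (p-q)/2 = p := by ring
    have e2 : (p+q)/2 - (p-q)/2 = q := by ring
    rw [e1, e2] at this; exact this
  · have := Lob'_mid_le (m := (p+q)/2) (d := (q-p)/2)
      (by linarith) (by linarith) (by linarith) (by linarith)
    have e1 : (p+q)/2 + (q-p)/2 = q := by ring
    have e2 : (p+q)/2 - (q-p)/2 = p := by ring
    rw [e1, e2] at this; linarith

lemma Lob'_sum_strict {p q : ℝ} (hp : 0 ≤ p) (hq : 0 ≤ q) (hpq : p + q < π) (hne : p ≠ q) :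
    Lob' p + Lob' q < 2 * Lob' ((p+q)/2) := by
  rcases lt_or_gt_of_ne hne with h | h
  · have := Lob'_mid_strict (m := (p+q)/2) (d := (q-p)/2)
      (by linarith) (by linarith) (by linarith) (by linarith)
    have e1 : (p+q)/2 + (q-p)/2 = q := by ring
    have e2 : (p+q)/2 - (q-p)/2 = p := by ring
    rw [e1, e2] at this; linarith
  · have := Lob'_mid_strict (m := (p+q)/2) (d := (p-q)/2)
      (by linarith) (by linarith) (by linarith) (by linarith)
    have e1 : (p+q)/2 + (p-q)/2 = p := by ring
    have e2 : (p+q)/2 - (p-q)/2 = q := by ring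
    rw [e1, e2] at this; linarith

noncomputable def Hfun : ℝ → ℝ := fun x => 4 * Lob' (π/2 - π/2*x) + Lob' (π*x)

lemma Hfun_cont : ContinuousOn Hfun (Icc 0 1) := by
  have hpi : 0 < π := Real.pi_pos
  apply ContinuousOn.add
  · apply ContinuousOn.mul continuousOn_const
    apply Lob'_cont.comp (Continuous.continuousOn (by continuity))
    intro x hx
    constructor
    · nlinarith [hx.1, hx.2]
    · nlinarith [hx.1, hx.2]
  · apply Lob'_cont.comp (Continuous.continuousOn (by continuity))
    intro x hx
    constructor
    · nlinarith [hx.1, hx.2]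
    · nlinarith [hx.1, hx.2]

lemma Hfun_deriv {x : ℝ} (h0 : 0 < x) (h1 : x < 1) :
    HasDerivAt Hfun (2*π * Lb (π/2 - π/2*x) - π * Lb (π*x)) x := by
  have hpi : 0 < π := Real.pi_pos
  have h1' : HasDerivAt (fun x : ℝ => Lob' (π/2 - π/2*x)) (-Lb (π/2 - π/2*x) * (-(π/2))) x := by
    have hin : HasDerivAt (fun x : ℝ => π/2 - π/2*x) (-(π/2)) x := by
      simpa using ((hasDerivAt_id x).const_mul (π/2)).const_sub (π/2)
    exact (Lob'_deriv (by nlinarith) (by nlinarith)).comp x hin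
  have h2' : HasDerivAt (fun x : ℝ => Lob' (π*x)) (-Lb (π*x) * π) x := by
    have hin : HasDerivAt (fun x : ℝ => π*x) π x := by
      simpa using (hasDerivAt_id x).const_mul π
    exact (Lob'_deriv (by nlinarith) (by nlinarith)).comp x hin
  have := (h1'.const_mul (4:ℝ)).add h2'
  exact (this : HasDerivAt Hfun _ x).congr_deriv (by ring)

lemma Hfun_deriv_val {x : ℝ} (h0 : 0 < x) (h1 : x < 1) :
    2*π * Lb (π/2 - π/2*x) - π * Lb (π*x)
      = π * (Real.log (4 * Real.cos (π/2*x) ^ 2) - Real.log (4 * Real.sin (π/2*x) * Real.cos (π/2*x))) := by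
  have hpi : 0 < π := Real.pi_pos
  set u := π/2*x with hu
  have hu0 : 0 < u := by positivity
  have hu1 : u < π/2 := by rw [hu]; nlinarith
  have hs : 0 < Real.sin u := Real.sin_pos_of_pos_of_lt_pi hu0 (by linarith)
  have hc : 0 < Real.cos u := Real.cos_pos_of_mem_Ioo ⟨by linarith, hu1⟩
  have e1 : Lb (π/2 - u) = Real.log (2 * Real.cos u) := by
    rw [Lb, Real.sin_pi_div_two_sub, abs_of_pos (by linarith)]
  have e2 : Lb (π*x) = Real.log (4 * Real.sin u * Real.cos u) := by
    have e : π * x = 2 * u := by rw [hu]; ring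
    rw [Lb, e, Real.sin_two_mul, abs_of_pos (by nlinarith)]
    congr 1; ring
  have e3 : 2 * Real.log (2 * Real.cos u) = Real.log (4 * Real.cos u ^ 2) := by
    rw [show (4:ℝ) * Real.cos u ^ 2 = (2 * Real.cos u)^2 by ring, Real.log_pow]
    push_cast; ring
  rw [e1, e2]
  rw [← e3]
  ring

lemma Hfun_mono : StrictMonoOn Hfun (Icc 0 (1/2)) := by
  have hpi : 0 < π := Real.pi_pos
  apply strictMonoOn_of_deriv_pos (convex_Icc 0 (1/2))
  · exact Hfun_cont.mono (Icc_subset_Icc (le_refl _) (by norm_num))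
  · intro x hx
    rw [interior_Icc] at hx
    obtain ⟨h0, h1⟩ := hx
    rw [(Hfun_deriv h0 (by linarith)).deriv, Hfun_deriv_val h0 (by linarith)]
    set u := π/2*x with hu
    have hu0 : 0 < u := by positivity
    have hu1 : u < π/4 := by rw [hu]; nlinarith
    have hs : 0 < Real.sin u := Real.sin_pos_of_pos_of_lt_pi hu0 (by linarith)
    have hc : 0 < Real.cos u := Real.cos_pos_of_mem_Ioo ⟨by linarith, by linarith⟩
    have hsc : Real.sin u < Real.cos u := by
      rw [← Real.sin_pi_div_two_sub]
      exact Real.sin_lt_sin_of_lt_of_le_pi_div_two (by linarith) (by linarith) (by linarith)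
    have : Real.log (4 * Real.sin u * Real.cos u) < Real.log (4 * Real.cos u ^ 2) :=
      Real.log_lt_log (by positivity) (by nlinarith)
    have hπ : 0 < π := hpi
    nlinarith

lemma Hfun_anti : StrictAntiOn Hfun (Icc (1/2) 1) := by
  have hpi : 0 < π := Real.pi_pos
  apply strictAntiOn_of_deriv_neg (convex_Icc (1/2) 1)
  · exact Hfun_cont.mono (Icc_subset_Icc (by norm_num) (le_refl _))
  · intro x hx
    rw [interior_Icc] at hx
    obtain ⟨h0, h1⟩ := hx
    rw [(Hfun_deriv (by linarith) h1).deriv, Hfun_deriv_val (by linarith) h1]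
    set u := π/2*x with hu
    have hu0 : 0 < u := by rw [hu]; nlinarith
    have hu1 : u < π/2 := by rw [hu]; nlinarith
    have hu2 : π/4 < u := by rw [hu]; nlinarith
    have hs : 0 < Real.sin u := Real.sin_pos_of_pos_of_lt_pi hu0 (by linarith)
    have hc : 0 < Real.cos u := Real.cos_pos_of_mem_Ioo ⟨by linarith, hu1⟩
    have hsc : Real.cos u < Real.sin u := by
      rw [← Real.sin_pi_div_two_sub]
      exact Real.sin_lt_sin_of_lt_of_le_pi_div_two (by linarith) (by linarith) (by linarith)
    have : Real.log (4 * Real.cos u ^ 2) < Real.log (4 * Real.sin u * Real.cos u) :=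
      Real.log_lt_log (by positivity) (by nlinarith)
    nlinarith

end LobAux

open Set in
theorem stmt_2 (x y : ℝ) (hx : 0 ≤ x) (hy : 0 ≤ y) (hxy : x + y ≤ 1) :
    (-2 * Lob (π*(x+y)) + 2 * Lob (π*y) + Lob (π*x) ≤ 4 * Lob (π/4)) ∧
    (-2 * Lob (π*(x+y)) + 2 * Lob (π*y) + Lob (π*x) = 4 * Lob (π/4) ↔
      x = 1/2 ∧ y = 1/4) := by
  have hLL : Lob = Lob' := rfl
  rw [hLL]
  have hpi : 0 < π := Real.pi_pos
  have hx1 : x ≤ 1 := by linarith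
  set a := π*(1-x-y) with ha
  set b := π*y with hb
  set m := π/2 - π/2*x with hm
  have hm_eq : (a+b)/2 = m := by rw [ha, hb, hm]; ring
  have ha0 : 0 ≤ a := by rw [ha]; nlinarith
  have hb0 : 0 ≤ b := by rw [hb]; positivity
  have hab : a + b = π*(1-x) := by rw [ha, hb]; ring
  have habπ : a + b ≤ π := by rw [hab]; nlinarith
  -- rewrite -2 Lob'(π(x+y)) = 2 Lob' a
  have hreflx : Lob' (π*(x+y)) = -Lob' a := by
    have e : a = π - π*(x+y) := by rw [ha]; ring
    rw [e, Lob'_reflect (by positivity) (by nlinarith), neg_neg]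
  -- step 1
  have hstep1 : Lob' a + Lob' b ≤ 2 * Lob' m := by
    rw [← hm_eq]; exact Lob'_sum_le ha0 hb0 habπ
  -- Hfun values
  have hHx : Hfun x = 4 * Lob' m + Lob' (π*x) := by rw [Hfun, hm]
  have hH12 : Hfun (1/2) = 4 * Lob' (π/4) := by
    rw [Hfun]
    have e1 : π/2 - π/2*(1/2:ℝ) = π/4 := by ring
    have e2 : π*(1/2:ℝ) = π/2 := by ring
    rw [e1, e2, Lob'_half, add_zero]
  have hx12 : x ∈ Icc (0:ℝ) 1 := ⟨hx, hx1⟩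
  have hmem12 : (1/2:ℝ) ∈ Icc (0:ℝ) (1/2) := ⟨by norm_num, le_refl _⟩
  have hstep2 : Hfun x ≤ Hfun (1/2) := by
    rcases lt_trichotomy x (1/2) with h | h | h
    · exact (Hfun_mono ⟨hx, h.le⟩ hmem12 h).le
    · rw [h]
    · exact (Hfun_anti ⟨le_refl _, by norm_num⟩ ⟨h.le, hx1⟩ h).le
  constructor
  · -- inequality
    linarith [hreflx, hstep1, hstep2, hHx, hH12]
  · constructor
    · -- equality implies (1/2, 1/4)
      intro heq
      rw [hreflx] at heq
      have heq' : 2*Lob' a + 2*Lob' b + Lob' (π*x) = 4*Lob' (π/4) := by linarith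
      have hHeq : Hfun x = Hfun (1/2) := by
        apply le_antisymm hstep2
        rw [hH12, hHx]
        linarith
      have hx2 : x = 1/2 := by
        rcases lt_trichotomy x (1/2) with h | h | h
        · exact absurd hHeq (ne_of_lt (Hfun_mono ⟨hx, h.le⟩ hmem12 h))
        · exact h
        · exact absurd hHeq (ne_of_lt (Hfun_anti ⟨le_refl _, by norm_num⟩ ⟨h.le, hx1⟩ h))
      have habv : a + b = π/2 := by rw [hab, hx2]; ring
      have hsum_eq : Lob' a + Lob' b = 2 * Lob' m := by linarith [hHx, hH12, hHeq, heq']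
      have hao : a = b := by
        by_contra hne
        have hst := Lob'_sum_strict ha0 hb0 (by rw [habv]; linarith) hne
        rw [hm_eq] at hst
        linarith
      refine ⟨hx2, ?_⟩
      have hyy : 1 - x - y = y := mul_left_cancel₀ hpi.ne' (by rw [← ha, ← hb, hao])
      rw [hx2] at hyy
      linarith
    · rintro ⟨rfl, rfl⟩
      have e1 : π*(1/2+1/4:ℝ) = π - π/4 := by ring
      have e2 : π*(1/4:ℝ) = π/4 := by ring
      have e3 : π*(1/2:ℝ) = π/2 := by ring
      rw [e1, Lob'_reflect (by positivity) (by linarith), hb, e2, e3, Lob'_half]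
      ring
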